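/- Let H be a graph on k vertices with an isolated vertex, and H' = H plus a dominating vertex. If wt(H) > k − 2 (or H has no edges), then sat(H', n) ≤ ((k−1)/2)·n for all n ≥ k + 1, and hence lim_{n→∞} sat(H', n)/n = (k−1)/2. -/

import Mathlib

open SimpleGraph

/-- `H` has a copy in `G`: an injective graph homomorphism (i.e. a subgraph isomorphic to `H`). -/
def hasCopy {α β : Type*} (H : SimpleGraph α) (G : SimpleGraph β) : Prop :=
  ∃ f : H →g G, Function.Injective f

/-- `G` is `H`-saturated: `H`-free, and adding any missing edge creates a copy of `H`. -/
def isSat {α β : Type*} (H : SimpleGraph α) (G : SimpleGraph β) : Prop :=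
  ¬ hasCopy H G ∧ ∀ x y : β, x ≠ y → ¬ G.Adj x y →
    hasCopy H (G ⊔ SimpleGraph.fromEdgeSet {s(x, y)})

/-- The weight of an edge `uv`: with `deg u ≤ deg v`,
`wt(uv) = 2|N(u) ∩ N(v)| + |N(v) \ N(u)|`. -/
noncomputable def edgeWt {α : Type*} (H : SimpleGraph α) (u v : α) : ℕ :=
  if (H.neighborSet u).ncard ≤ (H.neighborSet v).ncard then
    2 * (H.neighborSet u ∩ H.neighborSet v).ncard + ((H.neighborSet v) \ (H.neighborSet u)).ncard
  else
    2 * (H.neighborSet u ∩ H.neighborSet v).ncard + ((H.neighborSet u) \ (H.neighborSet v)).ncard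

/-- The weight of a graph: the minimum weight of an edge. -/
noncomputable def graphWt {α : Type*} (H : SimpleGraph α) : ℕ :=
  sInf {w | ∃ u v, H.Adj u v ∧ w = edgeWt H u v}

/-- The saturation number: minimum number of edges of an `H`-saturated graph on `n` vertices. -/
noncomputable def satNum {α : Type*} (H : SimpleGraph α) (n : ℕ) : ℕ :=
  sInf {m | ∃ G : SimpleGraph (Fin n), isSat H G ∧ Nat.card G.edgeSet = m}

/-- The graph obtained from `H` by adding a dominating vertex (`none`). -/
def addDom {α : Type*} (H : SimpleGraph α) : SimpleGraph (Option α) :=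
  SimpleGraph.fromRel (fun x y => x = none ∨ ∃ u v, x = some u ∧ y = some v ∧ H.Adj u v)


section SatProofs

section Helpers

variable {α : Type*}

lemma addDom_adj_none_some (H : SimpleGraph α) (w : α) :
    (addDom H).Adj none (some w) := by
  rw [addDom, SimpleGraph.fromRel_adj]
  exact ⟨by simp, Or.inl (Or.inl rfl)⟩

lemma addDom_adj_some_some (H : SimpleGraph α) (a b : α) :
    (addDom H).Adj (some a) (some b) ↔ H.Adj a b := by
  rw [addDom, SimpleGraph.fromRel_adj]
  constructor
  · rintro ⟨hne, h | h⟩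
    · rcases h with h | ⟨u', v', hu', hv', h⟩
      · simp at h
      · simp only [Option.some.injEq] at hu' hv'
        subst hu'; subst hv'; exact h
    · rcases h with h | ⟨u', v', hu', hv', h⟩
      · simp at h
      · simp only [Option.some.injEq] at hu' hv'
        subst hu'; subst hv'; exact h.symm
  · intro h
    exact ⟨by simpa using h.ne, Or.inl (Or.inr ⟨a, b, rfl, rfl, h⟩)⟩

lemma addDom_adj_cases {H : SimpleGraph α} {x y : Option α} (h : (addDom H).Adj x y) :
    (x = none ∧ ∃ w, y = some w) ∨ (y = none ∧ ∃ w, x = some w) ∨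
      ∃ a b, x = some a ∧ y = some b ∧ H.Adj a b := by
  match x, y with
  | none, none => exact absurd h (SimpleGraph.irrefl _)
  | none, some w => exact Or.inl ⟨rfl, w, rfl⟩
  | some w, none => exact Or.inr (Or.inl ⟨rfl, w, rfl⟩)
  | some a, some b =>
    exact Or.inr (Or.inr ⟨a, b, rfl, rfl, (addDom_adj_some_some H a b).mp h⟩)

lemma ns_none (H : SimpleGraph α) : (addDom H).neighborSet none = Set.range some := by
  ext x
  match x with
  | none => simp [SimpleGraph.mem_neighborSet]
  | some w =>
    simp only [SimpleGraph.mem_neighborSet]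
    exact ⟨fun _ => ⟨w, rfl⟩, fun _ => addDom_adj_none_some H w⟩

lemma ns_some (H : SimpleGraph α) (a : α) :
    (addDom H).neighborSet (some a) = insert none (some '' H.neighborSet a) := by
  ext x
  match x with
  | none =>
    simp only [SimpleGraph.mem_neighborSet, Set.mem_insert_iff, true_or, iff_true]
    exact (addDom_adj_none_some H a).symm
  | some w =>
    simp only [SimpleGraph.mem_neighborSet, addDom_adj_some_some, Set.mem_insert_iff,
      Set.mem_image]
    constructor
    · intro h; exact Or.inr ⟨w, h, rfl⟩
    · rintro (h | ⟨w', hw', hww⟩)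
      · simp at h
      · simp only [Option.some.injEq] at hww; subst hww; exact hw'

lemma ncard_ns_none (H : SimpleGraph α) [Fintype α] :
    ((addDom H).neighborSet none).ncard = Fintype.card α := by
  rw [ns_none, ← Set.image_univ, Set.ncard_image_of_injective _ (Option.some_injective α),
    Set.ncard_univ, Nat.card_eq_fintype_card]

lemma ncard_insert_none [Fintype α] (s : Set α) :
    (insert (none : Option α) (some '' s)).ncard = s.ncard + 1 := by
  rw [Set.ncard_insert_of_notMem (by simp) (Set.toFinite _),
    Set.ncard_image_of_injective _ (Option.some_injective α)]

lemma ncard_ns_some (H : SimpleGraph α) [Fintype α] (a : α) :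
    ((addDom H).neighborSet (some a)).ncard = (H.neighborSet a).ncard + 1 := by
  rw [ns_some, ncard_insert_none]

lemma ns_some_inter (H : SimpleGraph α) (a b : α) :
    (addDom H).neighborSet (some a) ∩ (addDom H).neighborSet (some b) =
      insert none (some '' (H.neighborSet a ∩ H.neighborSet b)) := by
  rw [ns_some, ns_some, Set.image_inter (Option.some_injective α)]
  ext x
  simp only [Set.mem_inter_iff, Set.mem_insert_iff]
  tauto

lemma edgeWt_eq (H : SimpleGraph α) [Fintype α] (a b : α) :
    edgeWt H a b = (H.neighborSet a ∩ H.neighborSet b).ncard +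
      (max (H.neighborSet a).ncard (H.neighborSet b).ncard) := by
  unfold edgeWt
  split_ifs with h
  · have h1 := Set.ncard_inter_add_ncard_diff_eq_ncard (H.neighborSet b) (H.neighborSet a)
      (Set.toFinite _)
    rw [max_eq_right h]
    rw [Set.inter_comm (H.neighborSet b)] at h1
    omega
  · have h1 := Set.ncard_inter_add_ncard_diff_eq_ncard (H.neighborSet a) (H.neighborSet b)
      (Set.toFinite _)
    rw [max_eq_left (le_of_not_ge h)]
    omega

lemma key_wt (H : SimpleGraph α) [Fintype α] {k : ℕ} (hk : Fintype.card α = k)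
    (hbig : (∀ a b, ¬ H.Adj a b) ∨ k - 2 < graphWt H) :
    ∀ x y, (addDom H).Adj x y →
      k ≤ (max ((addDom H).neighborSet x).ncard ((addDom H).neighborSet y).ncard)
          + ((addDom H).neighborSet x ∩ (addDom H).neighborSet y).ncard := by
  intro x y hxy
  rcases addDom_adj_cases hxy with ⟨hx, w, hy⟩ | ⟨hy, w, hx⟩ | ⟨a, b, hx, hy, hab⟩
  · subst hx; subst hy
    have h : ((addDom H).neighborSet none).ncard = k := by rw [ncard_ns_none, hk]
    have := le_max_left ((addDom H).neighborSet none).ncard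
      ((addDom H).neighborSet (some w)).ncard
    omega
  · subst hx; subst hy
    have h : ((addDom H).neighborSet none).ncard = k := by rw [ncard_ns_none, hk]
    have := le_max_right ((addDom H).neighborSet (some w)).ncard
      ((addDom H).neighborSet none).ncard
    omega
  · subst hx; subst hy
    rcases hbig with hno | hwt
    · exact absurd hab (hno a b)
    · have h1 : graphWt H ≤ edgeWt H a b := Nat.sInf_le ⟨a, b, hab, rfl⟩
      have h2 := edgeWt_eq H a b
      rw [ncard_ns_some, ncard_ns_some, ns_some_inter, ncard_insert_none]
      rcases le_total (H.neighborSet a).ncard (H.neighborSet b).ncard with hle | hle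
      · rw [max_eq_right (by omega : (H.neighborSet a).ncard + 1 ≤ (H.neighborSet b).ncard + 1)]
        rw [max_eq_right hle] at h2
        omega
      · rw [max_eq_left (by omega : (H.neighborSet b).ncard + 1 ≤ (H.neighborSet a).ncard + 1)]
        rw [max_eq_left hle] at h2
        omega

end Helpers

lemma sat_pair {α : Type*} [Fintype α] (H' : SimpleGraph (Option α))
    {k : ℕ}
    (hkey : ∀ x y, H'.Adj x y →
      k ≤ (max (H'.neighborSet x).ncard (H'.neighborSet y).ncard)
          + (H'.neighborSet x ∩ H'.neighborSet y).ncard)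
    {n : ℕ} {G : SimpleGraph (Fin n)} (hsat : isSat H' G)
    {x y : Fin n} (hxy : x ≠ y) (hnadj : ¬ G.Adj x y)
    (hmin : ∀ v, (G.neighborSet x).ncard ≤ (G.neighborSet v).ncard) :
    k ≤ (G.neighborSet y).ncard + 1 + (G.neighborSet x ∩ G.neighborSet y).ncard := by
  obtain ⟨f, hinj⟩ := hsat.2 x y hxy hnadj
  have hedge : ∀ p q : Fin n, (G ⊔ SimpleGraph.fromEdgeSet {s(x, y)}).Adj p q →
      G.Adj p q ∨ (p = x ∧ q = y) ∨ (p = y ∧ q = x) := by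
    intro p q h
    rcases h with h | h
    · exact Or.inl h
    · rw [SimpleGraph.fromEdgeSet_adj, Set.mem_singleton_iff, Sym2.eq_iff] at h
      tauto
  have hex : ∃ a b, H'.Adj a b ∧ f a = x ∧ f b = y := by
    by_contra hc
    push_neg at hc
    apply hsat.1
    refine ⟨⟨f, ?_⟩, hinj⟩
    intro a b hab
    rcases hedge _ _ (f.map_adj hab) with h | ⟨h1, h2⟩ | ⟨h1, h2⟩
    · exact h
    · exact absurd h2 (hc a b hab h1)
    · exact absurd h1 (hc b a hab.symm h2)
  obtain ⟨a, b, hab, hfa, hfb⟩ := hex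
  have himg1 : ∀ c, H'.Adj b c → c ≠ a → G.Adj y (f c) := by
    intro c hbc hca
    rcases hedge _ _ (f.map_adj hbc) with h | ⟨h1, h2⟩ | ⟨h1, h2⟩
    · rwa [hfb] at h
    · rw [hfb] at h1; exact absurd h1.symm hxy
    · exact absurd (hinj (h2.trans hfa.symm)) hca
  have himg2 : ∀ c, H'.Adj a c → c ≠ b → G.Adj x (f c) := by
    intro c hac hcb
    rcases hedge _ _ (f.map_adj hac) with h | ⟨h1, h2⟩ | ⟨h1, h2⟩
    · rwa [hfa] at h
    · exact absurd (hinj (h2.trans hfb.symm)) hcb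
    · rw [hfa] at h1; exact absurd h1 hxy
  have hB : (H'.neighborSet b).ncard ≤ (G.neighborSet y).ncard + 1 := by
    have hsub : f '' (H'.neighborSet b \ {a}) ⊆ G.neighborSet y := by
      rintro _ ⟨c, ⟨hc, hca⟩, rfl⟩
      exact himg1 c hc (by simpa using hca)
    have h1 : (f '' (H'.neighborSet b \ {a})).ncard = (H'.neighborSet b \ {a}).ncard :=
      Set.ncard_image_of_injective _ hinj
    have h2 : (H'.neighborSet b \ {a}).ncard + 1 = (H'.neighborSet b).ncard :=
      Set.ncard_diff_singleton_add_one (hab.symm) (Set.toFinite _)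
    have h3 := Set.ncard_le_ncard hsub (Set.toFinite _)
    omega
  have hA : (H'.neighborSet a).ncard ≤ (G.neighborSet y).ncard + 1 := by
    have hsub : f '' (H'.neighborSet a \ {b}) ⊆ G.neighborSet x := by
      rintro _ ⟨c, ⟨hc, hcb⟩, rfl⟩
      exact himg2 c hc (by simpa using hcb)
    have h1 : (f '' (H'.neighborSet a \ {b})).ncard = (H'.neighborSet a \ {b}).ncard :=
      Set.ncard_image_of_injective _ hinj
    have h2 : (H'.neighborSet a \ {b}).ncard + 1 = (H'.neighborSet a).ncard :=
      Set.ncard_diff_singleton_add_one hab (Set.toFinite _)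
    have h3 := Set.ncard_le_ncard hsub (Set.toFinite _)
    have h4 := hmin y
    omega
  have hC : (H'.neighborSet a ∩ H'.neighborSet b).ncard ≤
      (G.neighborSet x ∩ G.neighborSet y).ncard := by
    have hsub : f '' (H'.neighborSet a ∩ H'.neighborSet b) ⊆
        G.neighborSet x ∩ G.neighborSet y := by
      rintro _ ⟨c, ⟨hca, hcb⟩, rfl⟩
      exact ⟨himg2 c hca (fun h => H'.irrefl (h ▸ hcb)),
        himg1 c hcb (fun h => H'.irrefl (h ▸ hca))⟩
    have h1 : (f '' (H'.neighborSet a ∩ H'.neighborSet b)).ncard =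
        (H'.neighborSet a ∩ H'.neighborSet b).ncard :=
      Set.ncard_image_of_injective _ hinj
    have h3 := Set.ncard_le_ncard hsub (Set.toFinite _)
    omega
  have hk := hkey a b hab
  have hmax : (max (H'.neighborSet a).ncard (H'.neighborSet b).ncard) ≤
      (G.neighborSet y).ncard + 1 := max_le hA hB
  omega


lemma lower_bound {α : Type*} [Fintype α] (H' : SimpleGraph (Option α)) {k : ℕ}
    (hkey : ∀ x y, H'.Adj x y →
      k ≤ (max (H'.neighborSet x).ncard (H'.neighborSet y).ncard)
          + (H'.neighborSet x ∩ H'.neighborSet y).ncard)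
    {n : ℕ} (hn : 0 < n) {G : SimpleGraph (Fin n)} (hsat : isSat H' G) :
    (k - 1) * n ≤ 2 * Nat.card G.edgeSet + (k - 1) * k := by
  classical
  rcases Nat.eq_zero_or_pos k with rfl | hk0
  · simp
  obtain ⟨k', rfl⟩ : ∃ k', k = k' + 1 := ⟨k - 1, (Nat.succ_pred_eq_of_pos hk0).symm⟩
  simp only [Nat.add_sub_cancel]
  letI : DecidableRel G.Adj := Classical.decRel _
  have hdeg : ∀ v, (G.neighborSet v).ncard = G.degree v := fun v => by
    rw [← SimpleGraph.card_neighborSet_eq_degree, ← Nat.card_eq_fintype_card,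
      Nat.card_coe_set_eq]
  have hE : ∑ v, G.degree v = 2 * Nat.card G.edgeSet := by
    rw [SimpleGraph.sum_degrees_eq_twice_card_edges]
    congr 1
    rw [Nat.card_eq_fintype_card, ← Set.toFinset_card]
    exact congrArg Finset.card (Finset.ext fun e => by simp)
  obtain ⟨x₀, -, hx₀⟩ := Finset.exists_min_image Finset.univ (fun v => G.degree v)
    ⟨⟨0, hn⟩, Finset.mem_univ _⟩
  by_cases hd : k' ≤ G.degree x₀
  · have h1 : k' * n ≤ ∑ v, G.degree v := by
      calc k' * n = ∑ _v : Fin n, k' := by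
            rw [Finset.sum_const, Finset.card_univ, Fintype.card_fin, smul_eq_mul, mul_comm]
        _ ≤ _ := Finset.sum_le_sum (fun v _ => le_trans hd (hx₀ v (Finset.mem_univ _)))
    omega
  · set S := Finset.univ.filter (fun z => z ≠ x₀ ∧ ¬ G.Adj x₀ z) with hS
    have hSmem : ∀ z, z ∈ S ↔ z ≠ x₀ ∧ ¬ G.Adj x₀ z := by
      intro z; simp [hS]
    have hcodeg : ∀ z, (G.neighborSet x₀ ∩ G.neighborSet z).ncard =
        (G.neighborFinset x₀ ∩ G.neighborFinset z).card := by
      intro z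
      rw [Set.ncard_eq_toFinset_card', Set.toFinset_inter]
      congr 1
    have hpair : ∀ z ∈ S, k' + 1 ≤ G.degree z + 1 +
        (G.neighborFinset x₀ ∩ G.neighborFinset z).card := by
      intro z hz
      obtain ⟨hz1, hz2⟩ := (hSmem z).mp hz
      have := sat_pair H' hkey hsat (Ne.symm hz1) hz2
        (fun v => by rw [hdeg, hdeg]; exact hx₀ v (Finset.mem_univ _))
      rwa [hdeg, hcodeg] at this
    have hsum1 : (k' + 1) * S.card ≤
        ∑ z ∈ S, (G.degree z + 1 + (G.neighborFinset x₀ ∩ G.neighborFinset z).card) := by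
      rw [mul_comm]
      exact Finset.sum_le_sum hpair |>.trans_eq' (by rw [Finset.sum_const, smul_eq_mul])
    have hsum2 : ∑ z ∈ S, (G.neighborFinset x₀ ∩ G.neighborFinset z).card ≤
        ∑ w ∈ G.neighborFinset x₀, G.degree w := by
      have e1 : ∀ z, (G.neighborFinset x₀ ∩ G.neighborFinset z).card =
          ∑ w ∈ G.neighborFinset x₀, (if w ∈ G.neighborFinset z then 1 else 0) := by
        intro z
        rw [← Finset.card_filter, Finset.filter_mem_eq_inter]
      calc ∑ z ∈ S, (G.neighborFinset x₀ ∩ G.neighborFinset z).card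
          = ∑ w ∈ G.neighborFinset x₀, ∑ z ∈ S, (if w ∈ G.neighborFinset z then 1 else 0) := by
            simp_rw [e1]; exact Finset.sum_comm
        _ ≤ _ := by
            apply Finset.sum_le_sum
            intro w _
            rw [← Finset.card_filter]
            apply Finset.card_le_card
            intro z hzmem
            rw [Finset.mem_filter] at hzmem
            rw [SimpleGraph.mem_neighborFinset] at hzmem ⊢
            exact hzmem.2.symm
    have hdisj : Disjoint S (G.neighborFinset x₀) := by
      rw [Finset.disjoint_left]
      intro z hz hz'
      exact ((hSmem z).mp hz).2 ((SimpleGraph.mem_neighborFinset _ _ _).mp hz')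
    have hsum3 : ∑ z ∈ S, G.degree z + ∑ w ∈ G.neighborFinset x₀, G.degree w ≤
        ∑ v, G.degree v := by
      rw [← Finset.sum_union hdisj]
      exact Finset.sum_le_sum_of_subset (Finset.subset_univ _)
    have hcard : S.card + (G.degree x₀ + 1) = n := by
      have hc : Sᶜ = insert x₀ (G.neighborFinset x₀) := by
        ext z
        simp only [Finset.mem_compl, hSmem, Finset.mem_insert, SimpleGraph.mem_neighborFinset]
        tauto
      have h2 : S.card + Sᶜ.card = n := by
        rw [Finset.card_add_card_compl, Fintype.card_fin]
      rw [hc, Finset.card_insert_of_notMem (SimpleGraph.notMem_neighborFinset_self _ _)] at h2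
      have h3 : (G.neighborFinset x₀).card = G.degree x₀ :=
        SimpleGraph.card_neighborFinset_eq_degree _ _
      omega
    have hsplit : ∑ z ∈ S, (G.degree z + 1 + (G.neighborFinset x₀ ∩ G.neighborFinset z).card)
        = ∑ z ∈ S, G.degree z + S.card +
          ∑ z ∈ S, (G.neighborFinset x₀ ∩ G.neighborFinset z).card := by
      rw [Finset.sum_add_distrib, Finset.sum_add_distrib, Finset.sum_const, smul_eq_mul, mul_one]
    have hmain : (k' + 1) * S.card ≤ ∑ v, G.degree v + S.card := by
      rw [hsplit] at hsum1
      omega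
    have e2 : k' * S.card + S.card = (k' + 1) * S.card := by ring
    have h3 : k' * S.card ≤ ∑ v, G.degree v := by omega
    have h4 : k' * (G.degree x₀ + 1) ≤ k' * (k' + 1) :=
      Nat.mul_le_mul_left _ (by omega)
    calc k' * n = k' * S.card + k' * (G.degree x₀ + 1) := by
          rw [← Nat.mul_add, hcard]
      _ ≤ 2 * Nat.card G.edgeSet + k' * (k' + 1) := by omega

end SatProofs

section Cliques

/-- disjoint union of cliques of size `k` (plus one smaller remainder clique) -/
def cG (n k : ℕ) : SimpleGraph (Fin n) :=
  SimpleGraph.fromRel (fun x y => (x : ℕ) / k = (y : ℕ) / k)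

lemma cG_adj {n k : ℕ} {x y : Fin n} :
    (cG n k).Adj x y ↔ x ≠ y ∧ (x : ℕ) / k = (y : ℕ) / k := by
  rw [cG, SimpleGraph.fromRel_adj]
  constructor
  · rintro ⟨h, h' | h'⟩
    · exact ⟨h, h'⟩
    · exact ⟨h, h'.symm⟩
  · rintro ⟨h, h'⟩
    exact ⟨h, Or.inl h'⟩

def blockF (n k : ℕ) (b : ℕ) : Finset (Fin n) :=
  Finset.univ.filter (fun y : Fin n => (y : ℕ) / k = b)

lemma card_blockF {n k : ℕ} (hk : 0 < k) (b : ℕ) : (blockF n k b).card ≤ k := by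
  have h := Finset.card_le_card_of_injOn (f := fun y : Fin n => (⟨(y : ℕ) % k, Nat.mod_lt _ hk⟩ : Fin k))
    (s := blockF n k b) (t := Finset.univ) (fun a _ => Finset.mem_univ _) ?_
  · simpa using h
  · intro y1 h1 y2 h2 he
    simp only [blockF, Finset.mem_coe, Finset.mem_filter] at h1 h2
    have hmod : (y1 : ℕ) % k = (y2 : ℕ) % k := by
      simpa [Fin.mk.injEq] using he
    have : (y1 : ℕ) = (y2 : ℕ) := by
      have e1 := Nat.div_add_mod (y1 : ℕ) k
      have e2 := Nat.div_add_mod (y2 : ℕ) k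
      rw [h1.2, h2.2] at *
      omega
    exact Fin.ext this

lemma cG_degree_le {n k : ℕ} (hk : 0 < k) [DecidableRel (cG n k).Adj] (v : Fin n) :
    (cG n k).degree v + 1 ≤ k := by
  have hsub : insert v ((cG n k).neighborFinset v) ⊆ blockF n k ((v : ℕ) / k) := by
    intro w hw
    rcases Finset.mem_insert.mp hw with rfl | hw
    · simp [blockF]
    · rw [SimpleGraph.mem_neighborFinset] at hw
      obtain ⟨-, hb⟩ := cG_adj.mp hw
      simp [blockF, hb.symm]
  calc (cG n k).degree v + 1 = (insert v ((cG n k).neighborFinset v)).card := by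
        rw [Finset.card_insert_of_notMem (SimpleGraph.notMem_neighborFinset_self _ _)]
        rw [SimpleGraph.card_neighborFinset_eq_degree]
    _ ≤ (blockF n k ((v : ℕ) / k)).card := Finset.card_le_card hsub
    _ ≤ k := card_blockF hk _

lemma cG_free {α : Type*} [Fintype α] (H : SimpleGraph α) {k : ℕ}
    (hcard : Fintype.card α = k) (hk : 0 < k) (n : ℕ) :
    ¬ hasCopy (addDom H) (cG n k) := by
  rintro ⟨f, hinj⟩
  have hmem : ∀ o : Option α, f o ∈ blockF n k ((f none : ℕ) / k) := by
    intro o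
    match o with
    | none => simp [blockF]
    | some w =>
      have h := f.map_adj (addDom_adj_none_some H w)
      obtain ⟨-, hb⟩ := cG_adj.mp h
      simp [blockF, hb.symm]
  have h := Finset.card_le_card_of_injOn (f := fun o => f o) (s := Finset.univ)
    (t := blockF n k ((f none : ℕ) / k)) (fun o _ => hmem o) (fun a _ b _ h => hinj h)
  rw [Finset.card_univ, Fintype.card_option, hcard] at h
  exact absurd (h.trans (card_blockF hk _)) (by omega)

lemma cG_copy {α : Type*} [Fintype α] (H : SimpleGraph α) {k : ℕ}
    (hcard : Fintype.card α = k) (u : α) (hu : ∀ w, ¬ H.Adj u w)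
    {n : ℕ} {x y : Fin n} (hlt : (x : ℕ) / k < (y : ℕ) / k) :
    hasCopy (addDom H) (cG n k ⊔ SimpleGraph.fromEdgeSet {s(x, y)}) := by
  classical
  have hk : 0 < k := hcard ▸ Fintype.card_pos_iff.mpr ⟨u⟩
  set b := (x : ℕ) / k with hb
  have hfull : ∀ j : Fin k, k * b + (j : ℕ) < n := by
    intro j
    have h1 : k * (b + 1) ≤ k * ((y : ℕ) / k) := Nat.mul_le_mul_left _ hlt
    have h2 : k * ((y : ℕ) / k) ≤ (y : ℕ) := Nat.mul_div_le _ _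
    have h3 : (y : ℕ) < n := y.isLt
    have h4 : (j : ℕ) < k := j.isLt
    have h5 : k * (b + 1) = k * b + k := by ring
    omega
  let e : α ≃ Fin k := Fintype.equivFinOfCardEq hcard
  let xm : Fin k := ⟨(x : ℕ) % k, Nat.mod_lt _ hk⟩
  let π : Fin k ≃ Fin k := Equiv.swap (e u) xm
  let g : Fin k → Fin n := fun j => ⟨k * b + (j : ℕ), hfull j⟩
  have hgblock : ∀ j, ((g j : ℕ)) / k = b := by
    intro j
    show (k * b + (j : ℕ)) / k = b
    rw [Nat.mul_add_div hk]
    simp [Nat.div_eq_of_lt j.isLt]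
  have hginj : Function.Injective g := by
    intro j1 j2 h
    have : k * b + (j1 : ℕ) = k * b + (j2 : ℕ) := congrArg Fin.val h
    exact Fin.ext (by omega)
  have hgx : g xm = x := by
    apply Fin.ext
    show k * b + (x : ℕ) % k = (x : ℕ)
    have h := Nat.div_add_mod (x : ℕ) k
    rw [← hb] at h
    omega
  have hyblock : ¬ ((y : ℕ) / k = b) := by omega
  -- the map
  let F : Option α → Fin n := fun o =>
    Option.elim o x (fun w => if w = u then y else g (π (e w)))
  have hFnotx : ∀ w, w ≠ u → F (some w) ≠ x := by
    intro w hw hcon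
    have h1 : F (some w) = g (π (e w)) := by simp [F, hw]
    rw [h1, ← hgx] at hcon
    have h2 : π (e w) = xm := hginj hcon
    have h3 : e w = π.symm xm := by rw [← h2]; simp
    have h4 : π.symm xm = e u := by simp [π, Equiv.symm_swap, Equiv.swap_apply_right]
    rw [h4] at h3
    exact hw (e.injective h3)
  have hFblock : ∀ w, w ≠ u → ((F (some w) : ℕ)) / k = b := by
    intro w hw
    have h1 : F (some w) = g (π (e w)) := by simp [F, hw]
    rw [h1]; exact hgblock _
  have hxyne : x ≠ y := by
    intro h
    rw [hb, h] at hlt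
    omega
  have hFinj : Function.Injective F := by
    intro o1 o2 h
    match o1, o2 with
    | none, none => rfl
    | none, some w =>
      exfalso
      by_cases hw : w = u
      · subst hw; simp [F] at h; exact hxyne h
      · exact hFnotx w hw h.symm
    | some w, none =>
      exfalso
      by_cases hw : w = u
      · subst hw; simp [F] at h; exact hxyne h.symm
      · exact hFnotx w hw h
    | some w1, some w2 =>
      by_cases h1 : w1 = u <;> by_cases h2 : w2 = u
      · subst h1; subst h2; rfl
      · exfalso
        have hyeq : F (some w2) = y := by rw [← h]; simp [F, h1]
        have hbl := hFblock w2 h2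
        rw [hyeq] at hbl
        exact hyblock hbl
      · exfalso
        have hyeq : F (some w1) = y := by rw [h]; simp [F, h2]
        have hbl := hFblock w1 h1
        rw [hyeq] at hbl
        exact hyblock hbl
      · have e1 : F (some w1) = g (π (e w1)) := by simp [F, h1]
        have e2 : F (some w2) = g (π (e w2)) := by simp [F, h2]
        rw [e1, e2] at h
        have := e.injective (π.injective (hginj h))
        rw [this]
  -- homomorphism property
  have hmapadj : ∀ {o1 o2 : Option α}, (addDom H).Adj o1 o2 →
      (cG n k ⊔ SimpleGraph.fromEdgeSet {s(x, y)}).Adj (F o1) (F o2) := by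
    have key : ∀ w : α,
        (cG n k ⊔ SimpleGraph.fromEdgeSet {s(x, y)}).Adj (F none) (F (some w)) := by
      intro w
      by_cases hw : w = u
      · refine Or.inr ?_
        rw [SimpleGraph.fromEdgeSet_adj]
        have h1 : F none = x := rfl
        have h2 : F (some w) = y := by simp [F, hw]
        rw [h1, h2]
        exact ⟨rfl, hxyne⟩
      · refine Or.inl ?_
        rw [cG_adj]
        refine ⟨Ne.symm (hFnotx w hw), ?_⟩
        have h1 : (F none : ℕ) / k = b := rfl
        rw [h1, hFblock w hw]
    have keyss : ∀ a c : α, H.Adj a c →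
        (cG n k ⊔ SimpleGraph.fromEdgeSet {s(x, y)}).Adj (F (some a)) (F (some c)) := by
      intro a c hac
      have ha : a ≠ u := fun h => hu c (h ▸ hac)
      have hc : c ≠ u := fun h => hu a (h ▸ hac.symm)
      refine Or.inl ?_
      rw [cG_adj]
      constructor
      · intro hcon
        have : a = c := by
          have := hFinj hcon
          simpa using this
        exact H.irrefl (this ▸ hac)
      · rw [hFblock a ha, hFblock c hc]
    intro o1 o2 h
    rcases addDom_adj_cases h with ⟨h1, w, h2⟩ | ⟨h2, w, h1⟩ | ⟨a, c, h1, h2, hac⟩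
    · subst h1; subst h2; exact key w
    · subst h1; subst h2; exact (key w).symm
    · subst h1; subst h2; exact keyss a c hac
  exact ⟨⟨F, hmapadj⟩, hFinj⟩



lemma cG_sat {α : Type*} [Fintype α] (H : SimpleGraph α) {k : ℕ}
    (hcard : Fintype.card α = k) (u : α) (hu : ∀ w, ¬ H.Adj u w) (n : ℕ) :
    isSat (addDom H) (cG n k) := by
  have hk : 0 < k := hcard ▸ Fintype.card_pos_iff.mpr ⟨u⟩
  constructor
  · exact cG_free H hcard hk n
  · intro x y hxy hnadj
    have hblocks : (x : ℕ) / k ≠ (y : ℕ) / k := fun h => hnadj (cG_adj.mpr ⟨hxy, h⟩)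
    rcases lt_or_gt_of_ne hblocks with h | h
    · exact cG_copy H hcard u hu h
    · have h2 := cG_copy H hcard u hu (x := y) (y := x) h
      rwa [Sym2.eq_swap] at h2

lemma cG_edge_bound {n k : ℕ} (hk : 0 < k) :
    2 * Nat.card (cG n k).edgeSet ≤ (k - 1) * n := by
  classical
  letI : DecidableRel (cG n k).Adj := Classical.decRel _
  have hE : ∑ v, (cG n k).degree v = 2 * Nat.card (cG n k).edgeSet := by
    rw [SimpleGraph.sum_degrees_eq_twice_card_edges]
    congr 1
    rw [Nat.card_eq_fintype_card, ← Set.toFinset_card]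
    exact congrArg Finset.card (Finset.ext fun e => by simp)
  have h1 : ∑ v, (cG n k).degree v ≤ (k - 1) * n := by
    calc ∑ v, (cG n k).degree v ≤ ∑ _v : Fin n, (k - 1) :=
          Finset.sum_le_sum (fun v _ => by have := cG_degree_le hk v; omega)
      _ = (k - 1) * n := by
          rw [Finset.sum_const, Finset.card_univ, Fintype.card_fin, smul_eq_mul, mul_comm]
  omega

/-- If the `k`-vertex graph `H` has an isolated vertex and either no edges or
`wt(H) > k - 2`, then `sat(H', n) <= ((k-1)/2) n` for all `n >= k + 1`, and
`sat(H', n)/n` tends to `(k-1)/2`, where `H' = H` plus a dominating vertex. -/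
theorem stmt10 {α : Type*} [Fintype α] (H : SimpleGraph α) (k : ℕ) (hk : Fintype.card α = k)
    (u : α) (hu : ∀ w, ¬ H.Adj u w)
    (hbig : (∀ a b, ¬ H.Adj a b) ∨ k - 2 < graphWt H) :
    (∀ n : ℕ, k + 1 ≤ n → 2 * satNum (addDom H) n ≤ (k - 1) * n) ∧
      Filter.Tendsto (fun n : ℕ => (satNum (addDom H) n : ℝ) / n) Filter.atTop
        (nhds (((k : ℝ) - 1) / 2)) := by
  have hk1 : 1 ≤ k := hk ▸ Fintype.card_pos_iff.mpr ⟨u⟩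
  obtain ⟨k', rfl⟩ : ∃ k', k = k' + 1 := ⟨k - 1, by omega⟩
  simp only [Nat.add_sub_cancel]
  have hkey := key_wt H hk hbig
  have hk0 : 0 < k' + 1 := by omega
  -- the saturated clique graph
  have hsatc : ∀ n : ℕ, isSat (addDom H) (cG n (k' + 1)) := cG_sat H hk u hu
  have hupper : ∀ n : ℕ, 2 * satNum (addDom H) n ≤ k' * n := by
    intro n
    have hmem : Nat.card (cG n (k' + 1)).edgeSet ∈
        {m | ∃ G : SimpleGraph (Fin n), isSat (addDom H) G ∧ Nat.card G.edgeSet = m} :=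
      ⟨cG n (k' + 1), hsatc n, rfl⟩
    have h1 : satNum (addDom H) n ≤ Nat.card (cG n (k' + 1)).edgeSet := Nat.sInf_le hmem
    have h2 := cG_edge_bound (n := n) (k := k' + 1) hk0
    simp only [Nat.add_sub_cancel] at h2
    omega
  have hlower : ∀ n : ℕ, 0 < n →
      k' * n ≤ 2 * satNum (addDom H) n + k' * (k' + 1) := by
    intro n hn
    have hne : {m | ∃ G : SimpleGraph (Fin n), isSat (addDom H) G ∧
        Nat.card G.edgeSet = m}.Nonempty := ⟨_, cG n (k' + 1), hsatc n, rfl⟩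
    obtain ⟨G, hsatG, hcardG⟩ := Nat.sInf_mem hne
    have hlb := lower_bound (addDom H) hkey hn hsatG
    simp only [Nat.add_sub_cancel] at hlb
    have : satNum (addDom H) n = Nat.card G.edgeSet := hcardG.symm
    omega
  refine ⟨fun n _ => hupper n, ?_⟩
  have hgoalc : ((↑(k' + 1) : ℝ) - 1) / 2 = (k' : ℝ) / 2 := by push_cast; ring
  rw [hgoalc]
  set Dn : ℝ := (k' : ℝ) * (k' + 1) with hDn
  apply tendsto_of_tendsto_of_tendsto_of_le_of_le'
    (g := fun n : ℕ => (k' : ℝ) / 2 - (Dn / 2) / n) (h := fun _ : ℕ => (k' : ℝ) / 2)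
  · have h0 := tendsto_const_div_atTop_nhds_zero_nat (Dn / 2)
    have := Filter.Tendsto.sub (tendsto_const_nhds (x := (k' : ℝ) / 2)
      (f := Filter.atTop (α := ℕ))) h0
    simpa using this
  · exact tendsto_const_nhds
  · refine Filter.eventually_atTop.mpr ⟨1, fun n hn => ?_⟩
    have hn0 : (0 : ℝ) < n := by exact_mod_cast hn
    have h1 := hlower n (by omega)
    have h1' : (k' : ℝ) * n ≤ 2 * (satNum (addDom H) n : ℝ) + Dn := by
      rw [hDn]
      exact_mod_cast h1
    have h2 : (k' : ℝ) / 2 ≤ ((satNum (addDom H) n : ℝ) + Dn / 2) / n := by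
      rw [div_le_div_iff₀ two_pos hn0]
      linarith
    have h3 := sub_le_sub_right h2 ((Dn / 2) / n)
    calc (k' : ℝ) / 2 - (Dn / 2) / n
        ≤ ((satNum (addDom H) n : ℝ) + Dn / 2) / n - (Dn / 2) / n := h3
      _ = (satNum (addDom H) n : ℝ) / n := by rw [div_sub_div_same]; ring_nf
  · refine Filter.eventually_atTop.mpr ⟨1, fun n hn => ?_⟩
    have hn0 : (0 : ℝ) < n := by exact_mod_cast hn
    have h1 := hupper n
    have h1' : 2 * (satNum (addDom H) n : ℝ) ≤ (k' : ℝ) * n := by exact_mod_cast h1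
    rw [div_le_div_iff₀ hn0 two_pos]
    linarith
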